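/- If v(n,r) ≠ 0, where r = ⌊log₂ n⌋, then the algebraic multiplicity of the eigenvalue 1 of A_n is exactly n − r − 1; that is, (x−1)^{n−r−1} divides the characteristic polynomial of A_n but (x−1)^{n−r} does not. -/

import Mathlib

/-- The Dirichlet matrix `D_n` attached to the coefficient sequence `a`. -/
def Dmat (n : ℕ) (a : ℕ → ℂ) : Matrix (Fin n) (Fin n) ℂ :=
  fun i j => if (i.val + 1) ∣ (j.val + 1) then a ((j.val + 1) / (i.val + 1)) else 0

/-- The weight matrix `W_n`: `(i,1)` entry `w i` for `2 ≤ i ≤ n`, other entries `0`. -/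
def Wmat (n : ℕ) (w : ℕ → ℂ) : Matrix (Fin n) (Fin n) ℂ :=
  fun i j => if j.val = 0 ∧ i.val ≠ 0 then w (i.val + 1) else 0

/-- `A_n = W_n + D_n`. -/
def Amat (n : ℕ) (a w : ℕ → ℂ) : Matrix (Fin n) (Fin n) ℂ :=
  Wmat n w + Dmat n a

/-- `dcoef a m k`: the sum of `∏ a ℓᵢ` over `k`-tuples of integers `ℓᵢ ≥ 2`
with product `m`. -/
noncomputable def dcoef (a : ℕ → ℂ) (m k : ℕ) : ℂ :=
  ∑ t ∈ (Fintype.piFinset fun _ : Fin k => Finset.Icc 2 m).filter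
      (fun t => ∏ i, t i = m), ∏ i, a (t i)

/-- `vcoef a w m k = ∑_{j=1}^{m} w j * d(j,k)`. -/
noncomputable def vcoef (a w : ℕ → ℂ) (m k : ℕ) : ℂ :=
  ∑ j ∈ Finset.Icc 1 m, w j * dcoef a j k

open Polynomial Matrix Finset

theorem charpoly_shift {n : ℕ} (M : Matrix (Fin n) (Fin n) ℂ) :
    M.charpoly = ((M - 1).charpoly).comp (X - C 1) := by
  have h : (charmatrix (M - 1)).map (eval₂RingHom C (X - C 1) : ℂ[X] →+* ℂ[X]) = charmatrix M := by
    ext i j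
    by_cases hij : i = j
    · subst hij
      simp only [Matrix.map_apply, charmatrix_apply_eq, coe_eval₂RingHom, eval₂_sub, eval₂_X,
        eval₂_C, Matrix.sub_apply, Matrix.one_apply_eq, map_sub]
      ring
    · simp [Matrix.map_apply, charmatrix_apply_ne _ _ _ hij, Matrix.sub_apply,
        Matrix.one_apply_ne hij]
  have h2 := (RingHom.map_det (eval₂RingHom C (X - C 1) : ℂ[X] →+* ℂ[X]) (charmatrix (M - 1)))
  rw [RingHom.mapMatrix_apply, h] at h2
  rw [Matrix.charpoly, Matrix.charpoly, ← h2]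
  rfl

theorem dvd_shift {p : ℂ[X]} {m : ℕ} :
    (X - 1 : ℂ[X]) ^ m ∣ p.comp (X - C 1) ↔ X ^ m ∣ p := by
  have hX : ((X : ℂ[X]) - C 1).comp (X + C 1) = X := by simp [sub_comp]
  constructor
  · rintro ⟨q, hq⟩
    refine ⟨q.comp (X + C 1), ?_⟩
    have := congrArg (fun r : ℂ[X] => r.comp (X + C 1)) hq
    simp only [mul_comp, pow_comp, sub_comp, one_comp, X_comp] at this
    rw [comp_assoc, hX, comp_X] at this
    rw [this]
    congr 1
    simp
  · rintro ⟨q, hq⟩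
    refine ⟨q.comp (X - C 1), ?_⟩
    rw [hq, mul_comp, pow_comp, X_comp]
    norm_num

def Nmat (n : ℕ) (a : ℕ → ℂ) : Matrix (Fin n) (Fin n) ℂ :=
  fun i j => if (i.val + 1) ∣ (j.val + 1) ∧ i ≠ j then a ((j.val + 1) / (i.val + 1)) else 0

theorem Nmat_eq_zero {n : ℕ} (a : ℕ → ℂ) {i j : Fin n} (h : ¬ i < j) : Nmat n a i j = 0 := by
  unfold Nmat
  rw [if_neg]
  rintro ⟨hd, hne⟩
  have := Nat.le_of_dvd (Nat.succ_pos _) hd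
  exact hne (Fin.ext (by omega))

theorem Nmat_pow_eq_zero {n : ℕ} (a : ℕ → ℂ) (k : ℕ) {i j : Fin n} (h : j.val < i.val + k) :
    (Nmat n a ^ k) i j = 0 := by
  induction k generalizing j with
  | zero =>
    rw [pow_zero, Matrix.one_apply, if_neg]
    intro he; subst he; omega
  | succ k ih =>
    rw [pow_succ, Matrix.mul_apply]
    refine Finset.sum_eq_zero fun p _ => ?_
    by_cases hp : p.val < i.val + k
    · rw [ih hp, zero_mul]
    · rw [Nmat_eq_zero a (by rw [Fin.lt_def]; omega), mul_zero]

theorem Nmat_pow_n {n : ℕ} (a : ℕ → ℂ) : (Nmat n a) ^ n = 0 := by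
  ext i j
  rw [Nmat_pow_eq_zero a n (by omega)]
  rfl

theorem det_charmatrix_Nmat {n : ℕ} (a : ℕ → ℂ) : (charmatrix (Nmat n a)).det = X ^ n := by
  rw [Matrix.det_of_upperTriangular ((charmatrix_blockTriangular_iff).2 ?_)]
  · rw [Finset.prod_congr rfl (fun i _ => ?_), Finset.prod_const, Finset.card_univ, Fintype.card_fin]
    rw [charmatrix_apply_eq, Nmat_eq_zero a (lt_irrefl i), map_zero, sub_zero]
  · intro i j hij
    exact Nmat_eq_zero a (by simpa using not_lt.2 (le_of_lt hij))

theorem adjugate_charmatrix_Nmat {n : ℕ} (a : ℕ → ℂ) :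
    adjugate (charmatrix (Nmat n a)) =
      ∑ k ∈ Finset.range n, (X : ℂ[X]) ^ (n - 1 - k) • ((Nmat n a ^ k).map (C : ℂ →+* ℂ[X])) := by
  set A := charmatrix (Nmat n a) with hA
  set S : Matrix (Fin n) (Fin n) ℂ[X] :=
    ∑ k ∈ Finset.range n, (X : ℂ[X]) ^ (n - 1 - k) • ((Nmat n a ^ k).map (C : ℂ →+* ℂ[X])) with hS
  have hAeq : A = (X : ℂ[X]) • (1 : Matrix (Fin n) (Fin n) ℂ[X]) - (Nmat n a).map (C : ℂ →+* ℂ[X]) := by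
    ext i j
    by_cases hij : i = j
    · subst hij
      simp [hA, charmatrix_apply_eq, Matrix.map_apply]
    · simp [hA, charmatrix_apply_ne _ _ _ hij, Matrix.map_apply, Matrix.one_apply_ne hij]
  have key : A * S = (X : ℂ[X]) ^ n • (1 : Matrix (Fin n) (Fin n) ℂ[X]) := by
    rw [hAeq, hS, Finset.mul_sum]
    have hterm : ∀ k ∈ Finset.range n,
        ((X : ℂ[X]) • (1 : Matrix (Fin n) (Fin n) ℂ[X]) - (Nmat n a).map (C : ℂ →+* ℂ[X])) *
          ((X : ℂ[X]) ^ (n - 1 - k) • ((Nmat n a ^ k).map (C : ℂ →+* ℂ[X]))) =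
        ((X : ℂ[X]) ^ (n - k) • ((Nmat n a ^ k).map (C : ℂ →+* ℂ[X])) -
          (X : ℂ[X]) ^ (n - (k+1)) • ((Nmat n a ^ (k+1)).map (C : ℂ →+* ℂ[X]))) := by
      intro k hk
      rw [Finset.mem_range] at hk
      have e1 : ((X : ℂ[X]) • (1 : Matrix (Fin n) (Fin n) ℂ[X])) *
          ((X : ℂ[X]) ^ (n - 1 - k) • ((Nmat n a ^ k).map (C : ℂ →+* ℂ[X]))) =
          (X : ℂ[X]) ^ (n - k) • ((Nmat n a ^ k).map (C : ℂ →+* ℂ[X])) := by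
        have hnk : n - k = (n - 1 - k) + 1 := by omega
        rw [Matrix.smul_mul, one_mul, smul_smul, hnk, pow_succ']
      have e2 : (Nmat n a).map (C : ℂ →+* ℂ[X]) *
          ((X : ℂ[X]) ^ (n - 1 - k) • ((Nmat n a ^ k).map (C : ℂ →+* ℂ[X]))) =
          (X : ℂ[X]) ^ (n - (k+1)) • ((Nmat n a ^ (k+1)).map (C : ℂ →+* ℂ[X])) := by
        have hnk2 : n - (k+1) = n - 1 - k := by omega
        rw [Matrix.mul_smul, ← Matrix.map_mul, ← pow_succ', hnk2]
      rw [sub_mul, e1, e2]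
    rw [Finset.sum_congr rfl hterm, Finset.sum_range_sub']
    simp [Nmat_pow_n a, Matrix.map_one (C : ℂ →+* ℂ[X]) (map_zero C) (map_one C)]
  have h2 : A * adjugate A = (X : ℂ[X]) ^ n • (1 : Matrix (Fin n) (Fin n) ℂ[X]) := by
    rw [Matrix.mul_adjugate, hA, det_charmatrix_Nmat]
  have h3 : (X : ℂ[X]) ^ n • S = (X : ℂ[X]) ^ n • adjugate A := by
    calc (X : ℂ[X]) ^ n • S = (A.det) • S := by rw [hA, det_charmatrix_Nmat]
    _ = (adjugate A * A) * S := by rw [Matrix.adjugate_mul, Matrix.smul_mul, one_mul]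
    _ = adjugate A * (A * S) := by rw [Matrix.mul_assoc]
    _ = adjugate A * (A * adjugate A) := by rw [key, h2]
    _ = (adjugate A * A) * adjugate A := by rw [Matrix.mul_assoc]
    _ = (X : ℂ[X]) ^ n • adjugate A := by
        rw [Matrix.adjugate_mul, hA, det_charmatrix_Nmat, Matrix.smul_mul, one_mul]
  apply Matrix.ext
  intro i j
  have h4 := congrFun (congrFun h3 i) j
  simp only [Matrix.smul_apply, smul_eq_mul] at h4
  exact (mul_left_cancel₀ (pow_ne_zero n X_ne_zero) h4.symm)



theorem dcoef_zero (a : ℕ → ℂ) (m : ℕ) : dcoef a m 0 = if m = 1 then 1 else 0 := by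
  unfold dcoef
  have h : (Fintype.piFinset fun _ : Fin 0 => Finset.Icc 2 m) = {(fun i => i.elim0)} := by
    apply Finset.eq_singleton_iff_unique_mem.2
    constructor
    · simp only [Fintype.mem_piFinset]
      intro i
      exact i.elim0
    · intro t _
      funext i
      exact i.elim0
  rw [h]
  rcases eq_or_ne m 1 with hm | hm
  · subst hm
    rw [if_pos rfl, Finset.filter_singleton, if_pos (by simp), Finset.sum_singleton]
    simp
  · rw [if_neg hm, Finset.filter_singleton, if_neg (by simpa using Ne.symm hm), Finset.sum_empty]

theorem dcoef_eq_zero_of_lt (a : ℕ → ℂ) {m k : ℕ} (h : m < 2 ^ k) : dcoef a m k = 0 := by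
  unfold dcoef
  refine Finset.sum_eq_zero fun t ht => ?_
  rw [Finset.mem_filter, Fintype.mem_piFinset] at ht
  exfalso
  have h2 : (2 : ℕ) ^ k ≤ ∏ i : Fin k, t i := by
    calc (2:ℕ) ^ k = ∏ _i : Fin k, 2 := by simp
      _ ≤ ∏ i, t i := Finset.prod_le_prod' fun i _ => (Finset.mem_Icc.1 (ht.1 i)).1
  exact absurd (h2.trans ht.2.le) (not_le.2 h)


theorem dcoef_succ (a : ℕ → ℂ) {m : ℕ} (hm : 1 ≤ m) (k : ℕ) :
    dcoef a m (k + 1) = ∑ d ∈ m.properDivisors, dcoef a d k * a (m / d) := by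
  have hrhs : ∀ d ∈ m.properDivisors, dcoef a d k * a (m / d) =
      ∑ s ∈ (Fintype.piFinset fun _ : Fin k => Finset.Icc 2 d).filter
        (fun s => ∏ i, s i = d), (∏ i, a (s i)) * a (m / d) := by
    intro d _
    rw [dcoef, Finset.sum_mul]
  rw [Finset.sum_congr rfl hrhs, Finset.sum_sigma', dcoef]
  refine Finset.sum_nbij' (i := fun t => ⟨∏ i : Fin k, t i.castSucc, Fin.init t⟩)
      (j := fun x => Fin.snoc x.2 (m / x.1)) ?_ ?_ ?_ ?_ ?_
  · -- forward membership
    intro t ht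
    rw [Finset.mem_filter, Fintype.mem_piFinset] at ht
    obtain ⟨h1, h2⟩ := ht
    rw [Fin.prod_univ_castSucc] at h2
    have hlast : 2 ≤ t (Fin.last k) := (Finset.mem_Icc.1 (h1 _)).1
    have hdpos : 0 < ∏ i : Fin k, t i.castSucc := by
      rcases Nat.eq_zero_or_pos (∏ i : Fin k, t i.castSucc) with h | h
      · rw [h, zero_mul] at h2; omega
      · exact h
    have hdlt : (∏ i : Fin k, t i.castSucc) < m := by
      have h3 := mul_lt_mul_of_pos_left (show (1:ℕ) < t (Fin.last k) by omega) hdpos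
      rw [mul_one] at h3
      rw [← h2]
      exact h3
    rw [Finset.mem_sigma]
    refine ⟨Nat.mem_properDivisors.2 ⟨⟨_, h2.symm⟩, hdlt⟩, ?_⟩
    rw [Finset.mem_filter, Fintype.mem_piFinset]
    refine ⟨fun i => ?_, rfl⟩
    rw [Finset.mem_Icc]
    refine ⟨(Finset.mem_Icc.1 (h1 _)).1, ?_⟩
    exact Nat.le_of_dvd hdpos (Finset.dvd_prod_of_mem _ (Finset.mem_univ i))
  · -- backward membership
    rintro ⟨d, s⟩ hx
    rw [Finset.mem_sigma] at hx
    obtain ⟨hd, hs⟩ := hx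
    rw [Nat.mem_properDivisors] at hd
    rw [Finset.mem_filter, Fintype.mem_piFinset] at hs
    obtain ⟨hs1, hs2⟩ := hs
    have hdpos : 0 < d := Nat.pos_of_dvd_of_pos hd.1 (by omega)
    obtain ⟨c, hc⟩ := hd.1
    have hdc : m / d = c := by rw [hc, Nat.mul_div_cancel_left _ hdpos]
    have hc2 : 2 ≤ c := by
      rcases Nat.lt_or_ge c 2 with h | h
      · exfalso; interval_cases c <;> omega
      · exact h
    rw [Finset.mem_filter, Fintype.mem_piFinset]
    constructor
    · intro i
      refine Fin.lastCases ?_ ?_ i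
      · show (Fin.snoc s (m / d) : Fin (k+1) → ℕ) (Fin.last k) ∈ Finset.Icc 2 m
        rw [Fin.snoc_last, Finset.mem_Icc]
        exact ⟨by omega, Nat.div_le_self _ _⟩
      · intro p
        show (Fin.snoc s (m / d) : Fin (k+1) → ℕ) p.castSucc ∈ Finset.Icc 2 m
        rw [Fin.snoc_castSucc, Finset.mem_Icc]
        have := Finset.mem_Icc.1 (hs1 p)
        exact ⟨this.1, this.2.trans (le_of_lt hd.2)⟩
    · show ∏ i : Fin (k+1), (Fin.snoc s (m / d) : Fin (k+1) → ℕ) i = m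
      rw [Fin.prod_univ_castSucc]
      simp only [Fin.snoc_castSucc, Fin.snoc_last]
      rw [hs2, Nat.mul_div_cancel' ⟨c, hc⟩]
  · -- left inverse
    intro t ht
    rw [Finset.mem_filter, Fintype.mem_piFinset] at ht
    obtain ⟨h1, h2⟩ := ht
    rw [Fin.prod_univ_castSucc] at h2
    have hdpos : 0 < ∏ i : Fin k, t i.castSucc := by
      rcases Nat.eq_zero_or_pos (∏ i : Fin k, t i.castSucc) with h | h
      · rw [h, zero_mul] at h2; omega
      · exact h
    have hdiv : m / (∏ i : Fin k, t i.castSucc) = t (Fin.last k) := by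
      rw [← h2, Nat.mul_div_cancel_left _ hdpos]
    show Fin.snoc (Fin.init t) (m / ∏ i : Fin k, t i.castSucc) = t
    rw [hdiv]
    exact Fin.snoc_init_self t
  · -- right inverse
    rintro ⟨d, s⟩ hx
    rw [Finset.mem_sigma] at hx
    obtain ⟨hd, hs⟩ := hx
    rw [Finset.mem_filter, Fintype.mem_piFinset] at hs
    have hprod : ∏ i : Fin k, (Fin.snoc s (m / d) : Fin (k+1) → ℕ) i.castSucc = d := by
      simp only [Fin.snoc_castSucc]
      exact hs.2
    have h2 : Fin.init (Fin.snoc s (m / d) : Fin (k+1) → ℕ) = s := by simp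
    exact Sigma.ext hprod (heq_of_eq h2)
  · -- values
    intro t ht
    rw [Finset.mem_filter, Fintype.mem_piFinset] at ht
    obtain ⟨h1, h2⟩ := ht
    rw [Fin.prod_univ_castSucc] at h2
    have hdpos : 0 < ∏ i : Fin k, t i.castSucc := by
      rcases Nat.eq_zero_or_pos (∏ i : Fin k, t i.castSucc) with h | h
      · rw [h, zero_mul] at h2; omega
      · exact h
    have hdiv : m / (∏ i : Fin k, t i.castSucc) = t (Fin.last k) := by
      rw [← h2, Nat.mul_div_cancel_left _ hdpos]
    show ∏ i : Fin (k+1), a (t i) = (∏ i : Fin k, a (Fin.init t i)) * a (m / ∏ i : Fin k, t i.castSucc)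
    rw [hdiv, Fin.prod_univ_castSucc]
    rfl
theorem Nmat_pow_apply {n : ℕ} (a : ℕ → ℂ) (h0 : 0 < n) (k : ℕ) (j : Fin n) :
    (Nmat n a ^ k) ⟨0, h0⟩ j = dcoef a (j.val + 1) k := by
  induction k generalizing j with
  | zero =>
    rw [pow_zero, Matrix.one_apply, dcoef_zero]
    by_cases hj : (⟨0, h0⟩ : Fin n) = j
    · rw [if_pos hj, if_pos (by rw [← hj])]
    · rw [if_neg hj, if_neg fun hc => hj (Fin.ext (show (0:ℕ) = j.val by omega))]
  | succ k ih =>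
    rw [pow_succ, Matrix.mul_apply]
    have hterm : ∀ p : Fin n, (Nmat n a ^ k) ⟨0, h0⟩ p * Nmat n a p j =
        if (p.val + 1) ∈ (j.val + 1).properDivisors then
          dcoef a (p.val + 1) k * a ((j.val + 1) / (p.val + 1)) else 0 := by
      intro p
      rw [ih]
      unfold Nmat
      by_cases hp : (p.val + 1) ∣ (j.val + 1) ∧ p ≠ j
      · rw [if_pos hp, if_pos]
        rw [Nat.mem_properDivisors]
        refine ⟨hp.1, ?_⟩
        have h1 := Nat.le_of_dvd (by omega) hp.1
        have h2 : p.val ≠ j.val := fun h => hp.2 (Fin.ext h)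
        omega
      · rw [if_neg hp, mul_zero, if_neg]
        rw [Nat.mem_properDivisors]
        rintro ⟨hd, hlt⟩
        exact hp ⟨hd, fun he => by rw [he] at hlt; omega⟩
    rw [Finset.sum_congr rfl fun p _ => hterm p, dcoef_succ a (by omega) k]
    rw [Fin.sum_univ_eq_sum_range
      (fun p => if (p + 1) ∈ (j.val + 1).properDivisors then
        dcoef a (p + 1) k * a ((j.val + 1) / (p + 1)) else 0) n]
    rw [← Finset.sum_filter]
    refine (Finset.sum_nbij' (i := fun d => d - 1) (j := fun p => p + 1) ?_ ?_ ?_ ?_ ?_).symm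
    · intro d hd
      have h1 : 0 < d := Nat.pos_of_dvd_of_pos (Nat.mem_properDivisors.1 hd).1 (by omega)
      have h2 : d < j.val + 1 := (Nat.mem_properDivisors.1 hd).2
      have h3 : j.val < n := j.isLt
      beta_reduce
      rw [Finset.mem_filter, Finset.mem_range]
      refine ⟨by omega, ?_⟩
      rw [show d - 1 + 1 = d by omega]
      exact hd
    · intro p hp
      exact (Finset.mem_filter.1 hp).2
    · intro d hd
      have h1 : 0 < d := Nat.pos_of_dvd_of_pos (Nat.mem_properDivisors.1 hd).1 (by omega)
      beta_reduce
      omega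
    · intro p _
      beta_reduce
      omega
    · intro d hd
      have h1 : 0 < d := Nat.pos_of_dvd_of_pos (Nat.mem_properDivisors.1 hd).1 (by omega)
      rw [show d - 1 + 1 = d by omega]
noncomputable def uvec (n : ℕ) (w : ℕ → ℂ) : Fin n → ℂ :=
  fun i => if i.val = 0 then 0 else w (i.val + 1)

theorem charpoly_formula {n : ℕ} (h0 : 0 < n) (a w : ℕ → ℂ) :
    (Wmat n w + Nmat n a).charpoly =
      X ^ n - ∑ k ∈ Finset.range n,
        C (∑ p : Fin n, uvec n w p * dcoef a (p.val + 1) k) * X ^ (n - 1 - k) := by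
  have hcm : charmatrix (Wmat n w + Nmat n a) =
      (charmatrix (Nmat n a)).updateCol ⟨0, h0⟩
        ((fun i => charmatrix (Nmat n a) i ⟨0, h0⟩) + (fun i => -(C (uvec n w i)))) := by
    ext i j
    rw [Matrix.updateCol_apply]
    by_cases hj : j = (⟨0, h0⟩ : Fin n)
    · rw [if_pos hj, Pi.add_apply]
      subst hj
      by_cases hij : i = (⟨0, h0⟩ : Fin n)
      · subst hij
        rw [charmatrix_apply_eq, charmatrix_apply_eq]
        have hW : (Wmat n w + Nmat n a) ⟨0, h0⟩ ⟨0, h0⟩ = Nmat n a ⟨0, h0⟩ ⟨0, h0⟩ := by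
          rw [Matrix.add_apply]
          simp [Wmat]
        rw [hW]
        simp [uvec]
      · rw [charmatrix_apply_ne _ _ _ hij, charmatrix_apply_ne _ _ _ hij]
        have hW : (Wmat n w + Nmat n a) i ⟨0, h0⟩ = Nmat n a i ⟨0, h0⟩ + uvec n w i := by
          rw [Matrix.add_apply]
          have hiv : i.val ≠ 0 := fun h => hij (Fin.ext h)
          simp [Wmat, uvec, hiv]
          ring
        rw [hW]
        simp
        ring
    · rw [if_neg hj]
      have hjv : j.val ≠ 0 := fun h => hj (Fin.ext h)
      have hW : (Wmat n w + Nmat n a) i j = Nmat n a i j := by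
        rw [Matrix.add_apply]
        simp [Wmat, hjv]
      by_cases hij : i = j
      · subst hij
        rw [charmatrix_apply_eq, charmatrix_apply_eq, hW]
      · rw [charmatrix_apply_ne _ _ _ hij, charmatrix_apply_ne _ _ _ hij, hW]
  rw [Matrix.charpoly, hcm, Matrix.det_updateCol_add, Matrix.updateCol_eq_self,
    det_charmatrix_Nmat]
  have hneg : (fun i => -(C (uvec n w i))) = (-1 : ℂ[X]) • (fun i => C (uvec n w i)) := by
    funext i
    simp
  rw [hneg, Matrix.det_updateCol_smul, ← Matrix.cramer_apply, Matrix.cramer_eq_adjugate_mulVec,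
    adjugate_charmatrix_Nmat]
  have hmv : ((∑ k ∈ Finset.range n, (X : ℂ[X]) ^ (n - 1 - k) •
      ((Nmat n a ^ k).map (C : ℂ →+* ℂ[X]))) *ᵥ (fun i => C (uvec n w i))) ⟨0, h0⟩ =
      ∑ k ∈ Finset.range n, C (∑ p : Fin n, uvec n w p * dcoef a (p.val + 1) k) * X ^ (n - 1 - k) := by
    rw [Matrix.mulVec, dotProduct]
    simp only [Matrix.sum_apply, Matrix.smul_apply, Matrix.map_apply, smul_eq_mul,
      Finset.sum_mul]
    rw [Finset.sum_comm]
    refine Finset.sum_congr rfl fun k _ => ?_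
    rw [map_sum, Finset.sum_mul]
    refine Finset.sum_congr rfl fun p _ => ?_
    rw [Nmat_pow_apply a h0 k p, _root_.map_mul]
    ring
  rw [hmv]
  ring

open Polynomial in
/-- If `v(n,r) ≠ 0` with `r = ⌊log₂ n⌋`, then the algebraic multiplicity of the
eigenvalue `1` of `A_n` is exactly `n - r - 1`: `(x-1)^{n-r-1}` divides the
characteristic polynomial of `A_n` but `(x-1)^{n-r}` does not. -/
theorem algebraic_multiplicity_one (n : ℕ) (hn : 2 ≤ n) (a w : ℕ → ℂ) (ha : a 1 = 1)
    (hw : w 1 = 1) (hv : vcoef a w n (Nat.log 2 n) ≠ 0) :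
    (X - 1) ^ (n - Nat.log 2 n - 1) ∣ (Amat n a w).charpoly ∧
    ¬ (X - 1) ^ (n - Nat.log 2 n) ∣ (Amat n a w).charpoly := by
  have hn0 : 0 < n := by omega
  set r := Nat.log 2 n with hrdef
  have hr1 : 1 ≤ r := Nat.log_pos (by norm_num) hn
  have hrn : r < n := lt_of_lt_of_le (Nat.lt_two_pow_self (n := r)) (Nat.pow_log_le_self 2 (by omega))
  have hr2 : n < 2 ^ (r + 1) := Nat.lt_pow_succ_log_self (by norm_num) n
  have hB : Amat n a w - 1 = Wmat n w + Nmat n a := by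
    ext i j
    by_cases hij : i = j
    · subst hij
      simp only [Amat, Matrix.sub_apply, Matrix.add_apply, Matrix.one_apply_eq]
      have hD : Dmat n a i i = 1 := by
        simp [Dmat, Nat.div_self (Nat.succ_pos i.val), ha]
      have hN : Nmat n a i i = 0 := by simp [Nmat]
      rw [hD, hN]
      ring
    · have h1 : (1 : Matrix (Fin n) (Fin n) ℂ) i j = 0 := Matrix.one_apply_ne hij
      simp only [Amat, Matrix.sub_apply, Matrix.add_apply, h1, sub_zero]
      congr 1
      simp only [Dmat, Nmat]
      by_cases hd : (i.val + 1) ∣ (j.val + 1)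
      · rw [if_pos hd, if_pos ⟨hd, hij⟩]
      · rw [if_neg hd, if_neg (fun hc => hd hc.1)]
  have hform : (Amat n a w - 1).charpoly =
      X ^ n - ∑ k ∈ Finset.range n,
        C (∑ p : Fin n, uvec n w p * dcoef a (p.val + 1) k) * X ^ (n - 1 - k) := by
    rw [hB]
    exact charpoly_formula hn0 a w
  set c : ℕ → ℂ := fun k => ∑ p : Fin n, uvec n w p * dcoef a (p.val + 1) k with hcdef
  have hcoeff : ∀ m, m ≤ n - 1 → (Amat n a w - 1).charpoly.coeff m = -(c (n - 1 - m)) := by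
    intro m hm
    rw [hform, coeff_sub, coeff_X_pow, if_neg (by omega), finset_sum_coeff]
    rw [Finset.sum_congr rfl (fun k _ => by rw [coeff_C_mul, coeff_X_pow])]
    rw [Finset.sum_eq_single (n - 1 - m)]
    · rw [if_pos (by omega)]
      ring
    · intro k hk hne
      rw [Finset.mem_range] at hk
      rw [if_neg (by omega), mul_zero]
    · intro hmem
      exact absurd (Finset.mem_range.2 (by omega)) hmem
  have hczero : ∀ k, n < 2 ^ k → c k = 0 := by
    intro k hk
    refine Finset.sum_eq_zero fun p _ => ?_
    rw [dcoef_eq_zero_of_lt a (by have := p.isLt; omega), mul_zero]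
  have hcr : c r = vcoef a w n r := by
    have h1 : c r = ∑ q ∈ Finset.range n,
        (if q = 0 then 0 else w (q + 1)) * dcoef a (q + 1) r := by
      rw [hcdef, ← Fin.sum_univ_eq_sum_range
        (fun q => (if q = 0 then 0 else w (q + 1)) * dcoef a (q + 1) r) n]
      rfl
    rw [h1, vcoef]
    refine Finset.sum_nbij' (i := fun q => q + 1) (j := fun j => j - 1) ?_ ?_ ?_ ?_ ?_
    · intro q hq
      rw [Finset.mem_range] at hq
      beta_reduce
      rw [Finset.mem_Icc]
      omega
    · intro j hj
      rw [Finset.mem_Icc] at hj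
      beta_reduce
      rw [Finset.mem_range]
      omega
    · intro q _
      beta_reduce
      omega
    · intro j hj
      rw [Finset.mem_Icc] at hj
      beta_reduce
      omega
    · intro q _
      beta_reduce
      by_cases hq : q = 0
      · subst hq
        rw [if_pos rfl, dcoef_eq_zero_of_lt a (by have : 1 < 2 ^ r := Nat.one_lt_two_pow (by omega); omega)]
        ring
      · rw [if_neg hq]
  constructor
  · rw [charpoly_shift (Amat n a w), dvd_shift, X_pow_dvd_iff]
    intro d hd
    rw [hcoeff d (by omega), hczero (n - 1 - d) ?_, neg_zero]
    calc n < 2 ^ (r + 1) := hr2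
      _ ≤ 2 ^ (n - 1 - d) := Nat.pow_le_pow_right (by norm_num) (by omega)
  · rw [charpoly_shift (Amat n a w), dvd_shift, X_pow_dvd_iff]
    intro hall
    have h2 := hall (n - r - 1) (by omega)
    rw [hcoeff (n - r - 1) (by omega), show n - 1 - (n - r - 1) = r by omega, hcr,
      neg_eq_zero] at h2
    exact hv h2
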